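/- With noise Z distributed as in TAP's bounded-noise mechanism on {−b,...,b}, sensitivity Δ = max over neighboring datasets of |R*(D) − R*(D')|, and b ≥ Δ, for any neighboring datasets D, D' with R*(D) > R*(D') and any set S contained in the interval [R*(D')−b, R*(D)−b) (where P(R(D) ∈ S) = 0), it holds that P(R(D') ∈ S) ≤ G(Δ−1). Hence on such sets the mechanism R(D) = R*(D) + Z satisfies the (0, δ)-differential privacy inequality with δ = G(Δ−1). -/

import Mathlib

/-- TAP's bounded-noise mechanism, region `A₂ = [R*(D')-b, R*(D)-b)`: the mechanism
`R(D) = R*(D) + Z` with `Z` supported on `{-b,...,b}` and CDF given via the partial sums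
`G` of `g` satisfies, for any `S ⊆ A₂`, `P(R(D) ∈ S) = 0` and `P(R(D') ∈ S) ≤ G (Δ - 1)`,
i.e. the `(0, G(Δ-1))`-differential-privacy inequality on such sets. -/
theorem tap_dp_region_A2 (b Δ : ℕ) (hbΔ : Δ ≤ b)
    (RD RD' : ℤ) (hlt : RD' < RD) (hsens : |RD - RD'| ≤ (Δ : ℤ))
    (p : ℤ → ℝ) (hp : ∀ z, 0 ≤ p z)
    (hsupp : ∀ z : ℤ, p z ≠ 0 → -(b : ℤ) ≤ z ∧ z ≤ (b : ℤ))
    (g : ℕ → ℝ) (hg : ∀ x, 0 ≤ g x)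
    (G : ℕ → ℝ) (hG : ∀ z, G z = ∑ x ∈ Finset.range (z + 1), g x)
    (hnorm : g 0 + 2 * G (b - 1) = 1)
    (hcdf : ∀ z : ℤ, -(b : ℤ) ≤ z → z ≤ 0 →
      (∑ x ∈ Finset.Icc (-(b : ℤ)) z, p x) = G (z + b).toNat) :
    ∀ S : Finset ℤ, (∀ a ∈ S, RD' - (b : ℤ) ≤ a ∧ a < RD - (b : ℤ)) →
      (∑ a ∈ S, p (a - RD)) = 0 ∧ (∑ a ∈ S, p (a - RD')) ≤ G (Δ - 1) := by

  intro S hS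
  have hb : (Δ:ℤ) ≤ b := by exact_mod_cast hbΔ
  have hΔ : RD - RD' ≤ (Δ:ℤ) := by rwa [abs_of_pos (by linarith)] at hsens
  constructor
  · apply Finset.sum_eq_zero
    intro a ha
    by_contra h
    have h1 := (hsupp _ h).1
    have h2 := (hS a ha).2
    linarith
  · set z₀ : ℤ := RD - RD' - b - 1 with hz₀
    have h1 : -(b:ℤ) ≤ z₀ := by omega
    have h2 : z₀ ≤ 0 := by omega
    have key := hcdf z₀ h1 h2
    have hsub : S.image (· - RD') ⊆ Finset.Icc (-(b:ℤ)) z₀ := by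
      intro x hx
      simp only [Finset.mem_image] at hx
      obtain ⟨a, ha, rfl⟩ := hx
      have := hS a ha
      simp only [Finset.mem_Icc]
      omega
    have heq : (∑ a ∈ S, p (a - RD')) = ∑ x ∈ S.image (· - RD'), p x := by
      rw [Finset.sum_image]
      intro x _ y _ h
      have h' : x - RD' = y - RD' := h
      omega
    rw [heq]
    calc ∑ x ∈ S.image (· - RD'), p x ≤ ∑ x ∈ Finset.Icc (-(b:ℤ)) z₀, p x :=
          Finset.sum_le_sum_of_subset_of_nonneg hsub (fun i _ _ => hp i)
      _ = G (z₀ + b).toNat := key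
      _ ≤ G (Δ - 1) := by
          rw [hG, hG]
          apply Finset.sum_le_sum_of_subset_of_nonneg
          · apply Finset.range_subset_range.2
            omega
          · intro i _ _
            exact hg i
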